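/- The explicit 2-dimensional assignment μ(∪) ∈ 𝕂(2,0,2) with entries μ(∪)_{11} = 2−d, μ(∪)_{12} = 0, μ(∪)_{21} = d−2, μ(∪)_{22} = 1, and μ(∩) ∈ 𝕂(2,2,0) with entries μ(∩)^{11} = 1/(2−d), μ(∩)^{12} = 0, μ(∩)^{21} = 1, μ(∩)^{22} = 1, satisfies the Temperley–Lieb relations: μ(∪) ↕ μ(∩) = d (the scalar), and (μ(∪) ↔ Id₁) ↕ (Id₁ ↔ μ(∩)) = (Id₁ ↔ μ(∪)) ↕ (μ(∩) ↔ Id₁) = Id₁ (the 2×2 identity matrix). -/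

import Mathlib

open BigOperators

/-- Hypermatrices: families of scalars indexed by an `m`-tuple and an `n`-tuple
of indices in `[N]`, i.e. `N^m × N^n` matrices. -/
abbrev HM (K : Type) (N m n : ℕ) := (Fin m → Fin N) → (Fin n → Fin N) → K

/-- Horizontal composition of hypermatrices (Kronecker product of rectangular
matrices). -/
def hcomp {K : Type} [Mul K] {N m n m' n' : ℕ} (A : HM K N m n) (B : HM K N m' n') :
    HM K N (m + m') (n + n') :=
  fun I J =>
    A (fun i => I (Fin.castAdd m' i)) (fun j => J (Fin.castAdd n' j)) *
    B (fun i => I (Fin.natAdd m i)) (fun j => J (Fin.natAdd n j))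

/-- Vertical composition of hypermatrices (matrix product). -/
def vcomp {K : Type} [NonUnitalNonAssocSemiring K] {N m n p : ℕ}
    (A : HM K N m n) (B : HM K N n p) : HM K N m p :=
  fun I J => ∑ L : Fin n → Fin N, A I L * B L J

/-- The identity hypermatrix `Id_n = I(N)^{↔ n}`. -/
def idHM (K : Type) [Zero K] [One K] (N n : ℕ) : HM K N n n :=
  fun I J => if I = J then 1 else 0

/-- The elementary hypermatrix `E(N,p,q;I₀,J₀)` with entry 1 at `(I₀,J₀)` and 0
elsewhere. -/
def EHM (K : Type) [Zero K] [One K] (N p q : ℕ)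
    (I0 : Fin p → Fin N) (J0 : Fin q → Fin N) : HM K N p q :=
  fun I J => if I = I0 ∧ J = J0 then 1 else 0

/-- The explicit 2-dimensional cup hypermatrix `μ(∪) ∈ 𝕂(2,0,2)` with entries
`(2−d, 0, d−2, 1)` at indices `(11,12,21,22)`. -/
def cupHM (K : Type) [Field K] (d : K) : HM K 2 0 2 := fun _ J =>
  if J 0 = 0 ∧ J 1 = 0 then 2 - d
  else if J 0 = 0 ∧ J 1 = 1 then 0
  else if J 0 = 1 ∧ J 1 = 0 then d - 2
  else 1

/-- The explicit 2-dimensional cap hypermatrix `μ(∩) ∈ 𝕂(2,2,0)` with entries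
`(1/(2−d), 0, 1, 1)` at indices `(11,12,21,22)`. -/
def capHM (K : Type) [Field K] (d : K) : HM K 2 2 0 := fun I _ =>
  if I 0 = 0 ∧ I 1 = 0 then (2 - d)⁻¹
  else if I 0 = 0 ∧ I 1 = 1 then 0
  else 1

lemma sum_fun_succ {K : Type} [AddCommMonoid K] {N n : ℕ} (f : (Fin (n+1) → Fin N) → K) :
    ∑ L, f L = ∑ a : Fin N, ∑ L : Fin n → Fin N, f (Fin.cons a L) := by
  rw [← (Fin.consEquiv fun _ => Fin N).sum_comp f, Fintype.sum_prod_type]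
  rfl

lemma sum_fun_zero {K : Type} [AddCommMonoid K] {N : ℕ} (f : (Fin 0 → Fin N) → K) :
    ∑ L, f L = f (fun i => i.elim0) := by
  rw [Fintype.sum_eq_single (fun i => i.elim0)]
  intro x hx; exact absurd (funext fun i => i.elim0) hx

lemma cons3_zero (a b c : Fin 2) :
    (Fin.cons a (Fin.cons b (Fin.cons c (fun i => i.elim0))) : Fin 3 → Fin 2) 0 = a := rfl
lemma cons3_one (a b c : Fin 2) :
    (Fin.cons a (Fin.cons b (Fin.cons c (fun i => i.elim0))) : Fin 3 → Fin 2) 1 = b := rfl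
lemma cons3_two (a b c : Fin 2) :
    (Fin.cons a (Fin.cons b (Fin.cons c (fun i => i.elim0))) : Fin 3 → Fin 2) 2 = c := rfl
lemma ca20 : Fin.castAdd 2 (0 : Fin 1) = (0 : Fin 3) := rfl
lemma ca10 : Fin.castAdd 1 (0 : Fin 2) = (0 : Fin 3) := rfl
lemma ca11 : Fin.castAdd 1 (1 : Fin 2) = (1 : Fin 3) := rfl
lemma na10 : Fin.natAdd 1 (0 : Fin 2) = (1 : Fin 3) := rfl
lemma na11 : Fin.natAdd 1 (1 : Fin 2) = (2 : Fin 3) := rfl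
lemma na20 : Fin.natAdd 2 (0 : Fin 1) = (2 : Fin 3) := rfl

/-- The explicit 2-dimensional assignment satisfies the Temperley–Lieb relations:
`μ(∪) ↕ μ(∩) = d`, and
`(μ(∪) ↔ Id₁) ↕ (Id₁ ↔ μ(∩)) = (Id₁ ↔ μ(∪)) ↕ (μ(∩) ↔ Id₁) = Id₁`. -/
theorem temperley_lieb_rep {K : Type} [Field K] (d : K) (hd : d ≠ 2) :
    vcomp (cupHM K d) (capHM K d) = (fun _ _ => d) ∧
    vcomp (hcomp (cupHM K d) (idHM K 2 1) : HM K 2 1 3)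
        (hcomp (idHM K 2 1) (capHM K d) : HM K 2 3 1) = idHM K 2 1 ∧
    vcomp (hcomp (idHM K 2 1) (cupHM K d) : HM K 2 1 3)
        (hcomp (capHM K d) (idHM K 2 1) : HM K 2 3 1) = idHM K 2 1 := by
  have h2d : (2 : K) - d ≠ 0 := sub_ne_zero.mpr (Ne.symm hd)
  refine ⟨?_, ?_, ?_⟩ <;> funext I J <;>
    simp only [vcomp, sum_fun_succ, sum_fun_zero, hcomp, cupHM, capHM, idHM,
      Fin.sum_univ_two, Fin.cons_zero, Fin.cons_succ] <;>
    [skip;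
     (obtain hI | hI : I 0 = 0 ∨ I 0 = 1 := by omega <;> skip);
     (obtain hI | hI : I 0 = 0 ∨ I 0 = 1 := by omega <;> skip)]
  · simp
    field_simp
    ring
  all_goals
    obtain hJ | hJ : J 0 = 0 ∨ J 0 = 1 := by omega
  all_goals
    simp (config := { decide := true }) only [cons3_zero, cons3_one, cons3_two,
      ca20, ca10, ca11, na10, na11, na20, funext_iff, Fin.forall_fin_one, hI, hJ]
  all_goals simp [hI, hJ, Fin.forall_fin_one]
  all_goals field_simp
  all_goals ring
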